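/- Moving a job i that is scheduled last among a set B (all of which follow job c) to the very end of the schedule yields a feasible schedule (same number of jobs before c) in which the completion time of every other job does not increase, and the completion time of i becomes S = Σ_j s_j; if additionally C_i ≥ S − S' in the original schedule for some S' with S' ≤ εS/n and n > ε, the new weighted completion time of i is at most (1 + ε/(n−ε)) times its old weighted completion time. -/

import Mathlib

variable {α : Type*} [DecidableEq α]

/-- Completion time of job `j` in schedule list `l` with processing times `s`. -/
def complTime (s : α → ℝ) (l : List α) (j : α) : ℝ :=
  ((l.take (l.idxOf j + 1)).map s).sum

lemma complTime_append_left (s : α → ℝ) {l₁ : List α} (r : List α) {j : α} (hj : j ∈ l₁) :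
    complTime s (l₁ ++ r) j = complTime s l₁ j := by
  unfold complTime
  rw [List.idxOf_append_of_mem hj,
    List.take_append_of_le_length (List.idxOf_lt_length_iff.2 hj)]

lemma complTime_append_right (s : α → ℝ) {l₁ : List α} (r : List α) {j : α} (hj : j ∉ l₁) :
    complTime s (l₁ ++ r) j = (l₁.map s).sum + complTime s r j := by
  unfold complTime
  rw [List.idxOf_append_of_notMem hj, Nat.add_assoc, List.take_append, List.map_append,
    List.sum_append, List.take_of_length_le (Nat.le_add_right _ _), Nat.add_sub_cancel_left]

lemma complTime_cons_ne (s : α → ℝ) {r : List α} {i j : α} (hj : j ≠ i) :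
    complTime s (i :: r) j = s i + complTime s r j := by
  unfold complTime
  rw [List.idxOf_cons_ne _ (Ne.symm hj)]
  simp [List.take_succ_cons]

theorem move_to_end (w s : α → ℝ) (hw : ∀ a, 0 ≤ w a) (hs : ∀ a, 0 ≤ s a)
    (l₁ l₂ : List α) (i c : α) (hnd : (l₁ ++ i :: l₂).Nodup) (hc : c ∈ l₁)
    (S S' ε : ℝ) (n : ℕ) (hS : S = ((l₁ ++ i :: l₂).map s).sum) (hSpos : 0 < S)
    (hS' : 0 ≤ S') (hε : 0 ≤ ε) (hn : ε < (n : ℝ)) (hS'le : S' ≤ ε * S / n) :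
    (l₁ ++ l₂ ++ [i]).idxOf c = (l₁ ++ i :: l₂).idxOf c ∧
    (∀ j ∈ l₁ ++ l₂, complTime s (l₁ ++ l₂ ++ [i]) j ≤ complTime s (l₁ ++ i :: l₂) j) ∧
    complTime s (l₁ ++ l₂ ++ [i]) i = S ∧
    (S - S' ≤ complTime s (l₁ ++ i :: l₂) i →
      w i * complTime s (l₁ ++ l₂ ++ [i]) i ≤
        (1 + ε / ((n : ℝ) - ε)) * (w i * complTime s (l₁ ++ i :: l₂) i)) := by
  have hnd' := hnd
  simp only [List.nodup_append, List.nodup_cons, List.disjoint_cons_right,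
    List.mem_cons] at hnd'
  obtain ⟨h1, ⟨hi2, h2⟩, hright⟩ := hnd'
  have hi1 : i ∉ l₁ := fun h => hright i h i (Or.inl rfl) rfl
  have hdisj : ∀ {a}, a ∈ l₁ → a ∈ l₂ → False := fun h h' => hright _ h _ (Or.inr h') rfl
  have hSval : S = (l₁.map s).sum + (s i + (l₂.map s).sum) := by
    simpa using hS
  have hnew : complTime s (l₁ ++ l₂ ++ [i]) i = S := by
    have hi12 : i ∉ l₁ ++ l₂ := by
      simp only [List.mem_append]; tauto
    rw [complTime_append_right s [i] hi12]
    simp only [complTime, List.idxOf_cons_self, List.take_succ_cons, List.take_zero]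
    simp only [List.map_append, List.sum_append, List.map_cons, List.sum_cons, List.map_nil,
      List.sum_nil, hSval]
    ring
  have hold : complTime s (l₁ ++ i :: l₂) i = (l₁.map s).sum + s i := by
    rw [complTime_append_right s _ hi1]
    simp [complTime]
  refine ⟨?_, ?_, hnew, ?_⟩
  · rw [List.append_assoc, List.idxOf_append_of_mem hc, List.idxOf_append_of_mem hc]
  · intro j hj
    rcases List.mem_append.1 hj with hj1 | hj2
    · rw [List.append_assoc, complTime_append_left s _ hj1, complTime_append_left s _ hj1]
    · have hjn1 : j ∉ l₁ := fun h => hdisj h hj2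
      have hji : j ≠ i := by rintro rfl; exact hi2 hj2
      rw [List.append_assoc, complTime_append_right s _ hjn1, complTime_append_right s _ hjn1,
        complTime_cons_ne s hji, complTime_append_left s _ hj2]
      have := hs i
      linarith
  · intro hCi
    rw [hnew]
    set C := complTime s (l₁ ++ i :: l₂) i with hCdef
    have hCle : C ≤ S := by
      have : 0 ≤ (l₂.map s).sum := List.sum_nonneg (by simp; intro a _; exact hs a)
      rw [hold]; linarith [hSval]
    have hn0 : (0 : ℝ) < n := lt_of_le_of_lt hε hn
    have hne : (0 : ℝ) < (n : ℝ) - ε := by linarith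
    have h3 : (n : ℝ) * (ε * S / n) = ε * S := by field_simp
    have h1 : S - ε * S / n ≤ C := by linarith
    have key : S ≤ (1 + ε / ((n : ℝ) - ε)) * C := by
      have e1 : (1 + ε / ((n : ℝ) - ε)) = (n : ℝ) / ((n : ℝ) - ε) := by field_simp; ring
      rw [e1, div_mul_eq_mul_div, le_div_iff₀ hne]
      nlinarith [mul_le_mul_of_nonneg_left h1 (le_of_lt hn0)]
    calc w i * S ≤ w i * ((1 + ε / ((n : ℝ) - ε)) * C) :=
          mul_le_mul_of_nonneg_left key (hw i)
      _ = (1 + ε / ((n : ℝ) - ε)) * (w i * C) := by ring
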